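/- (Upper estimate of the inner-product sum, -1 < q < 0) Suppose -1 < q < 0 and set F(q) = D(q)³·C(|q|)³/(1-|q|). For all natural numbers r, s, r', s', k with r + s = r' + s' and r ≥ r', one has |∑_{i=0}^{r'} q^{(r-i)(r'-i) + k(r-i) + k(r'-i)}·[r']_q!·[s']_q!·binom(r,i)_q·binom(s,r'-i)_q| ≤ F(q)·|q|^{k(r-r')}·[r+s]_q!, where terms with i > r or r' - i > s vanish since the corresponding q-binomial coefficient is 0. -/

import Mathlib

/-- The q-integer `[n]_q = (1 - q^n)/(1 - q)`. -/
noncomputable def qInt (q : ℝ) (n : ℕ) : ℝ := (1 - q ^ n) / (1 - q)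

/-- The q-factorial `[n]_q! = [1]_q ⋯ [n]_q`, with `[0]_q! = 1`. -/
noncomputable def qFact (q : ℝ) : ℕ → ℝ
  | 0 => 1
  | n + 1 => qFact q n * qInt q (n + 1)

/-- The q-binomial coefficient `binom(n,m)_q`, with value `0` when `m > n`. -/
noncomputable def qBinom (q : ℝ) (n m : ℕ) : ℝ :=
  if m ≤ n then qFact q n / (qFact q m * qFact q (n - m)) else 0

/-- The constant `C(t) = ∏_{i=1}^∞ (1 - t^i)⁻¹` for `0 ≤ t < 1`. -/
noncomputable def Cconst (t : ℝ) : ℝ := ∏' i : ℕ, (1 - t ^ (i + 1))⁻¹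

/-- The constant `D(q) = ∏_{i=1}^∞ (1 + |q|^i)` for `-1 < q < 1`. -/
noncomputable def Dconst (q : ℝ) : ℝ := ∏' i : ℕ, (1 + |q| ^ (i + 1))

section Aux

variable {q t : ℝ}

lemma one_sub_q_pos (hq : |q| < 1) : 0 < 1 - q :=
  sub_pos.mpr (lt_of_le_of_lt (le_abs_self q) hq)

lemma qInt_pos (hq : |q| < 1) {n : ℕ} (hn : 1 ≤ n) : 0 < qInt q n := by
  have h2 : q ^ n < 1 := by
    calc q ^ n ≤ |q ^ n| := le_abs_self _
    _ = |q| ^ n := abs_pow q n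
    _ < 1 := pow_lt_one₀ (abs_nonneg q) hq (by omega)
  have h1 := one_sub_q_pos hq
  exact div_pos (by linarith) h1

lemma qFact_pos (hq : |q| < 1) (n : ℕ) : 0 < qFact q n := by
  induction n with
  | zero => norm_num [qFact]
  | succ m ih => exact mul_pos ih (qInt_pos hq (by omega))

lemma qBinom_nonneg (hq : |q| < 1) (n m : ℕ) : 0 ≤ qBinom q n m := by
  unfold qBinom
  split
  · exact div_nonneg (qFact_pos hq n).le
      (mul_pos (qFact_pos hq m) (qFact_pos hq (n - m))).le
  · exact le_refl 0

lemma qInt_le (hq : |q| < 1) (n : ℕ) : qInt q n ≤ (1 + |q| ^ n) / (1 - q) := by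
  have h1 := one_sub_q_pos hq
  have h2 : -(q ^ n) ≤ |q| ^ n := by
    rw [← abs_pow]; exact neg_le_abs _
  have h3 : (0:ℝ) ≤ 1 + |q| ^ n := by positivity
  exact div_le_div₀ h3 (by linarith) h1 le_rfl

lemma qInt_ge (hq : |q| < 1) (n : ℕ) : (1 - |q| ^ n) / (1 - q) ≤ qInt q n := by
  have h1 := one_sub_q_pos hq
  have h2 : q ^ n ≤ |q| ^ n := by
    rw [← abs_pow]; exact le_abs_self _
  have h4 : |q| ^ n ≤ 1 := pow_le_one₀ (abs_nonneg q) hq.le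
  exact div_le_div₀ (by linarith) (by linarith) h1 le_rfl

lemma qFact_add (q : ℝ) (a b : ℕ) :
    qFact q (a + b) = qFact q a * ∏ j ∈ Finset.range b, qInt q (a + j + 1) := by
  induction b with
  | zero => simp
  | succ m ih =>
    rw [show a + (m + 1) = (a + m) + 1 by ring]
    rw [show qFact q ((a + m) + 1) = qFact q (a + m) * qInt q ((a + m) + 1) from rfl]
    rw [ih, Finset.prod_range_succ, ← mul_assoc]

lemma qBinom_eq (hq : |q| < 1) {n m : ℕ} (h : m ≤ n) :
    qBinom q n m = ∏ j ∈ Finset.range m, (qInt q (n - m + j + 1) / qInt q (j + 1)) := by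
  have h1 : qFact q n = qFact q (n - m) * ∏ j ∈ Finset.range m, qInt q (n - m + j + 1) := by
    conv_lhs => rw [show n = (n - m) + m by omega]
    exact qFact_add q (n - m) m
  have h2 : qFact q m = ∏ j ∈ Finset.range m, qInt q (j + 1) := by
    have := qFact_add q 0 m
    simpa [qFact] using this
  have hF : qFact q (n - m) ≠ 0 := (qFact_pos hq (n - m)).ne'
  have hQ : (∏ j ∈ Finset.range m, qInt q (j + 1)) ≠ 0 := by
    rw [← h2]; exact (qFact_pos hq m).ne'
  unfold qBinom
  rw [if_pos h, h1, h2, Finset.prod_div_distrib]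
  field_simp

/-- Summability of the logs for the `D` product. -/
lemma summable_log_one_add (h0 : 0 ≤ t) (h1 : t < 1) :
    Summable fun n : ℕ => Real.log (1 + t ^ (n + 1)) := by
  apply Summable.of_nonneg_of_le
    (fun n => Real.log_nonneg (by nlinarith [pow_nonneg h0 (n + 1)]))
    (fun n => ?_) (summable_geometric_of_lt_one h0 h1)
  have hx : (0:ℝ) < 1 + t ^ (n + 1) := by positivity
  have hlog := Real.log_le_sub_one_of_pos hx
  have hpow : t ^ (n + 1) ≤ t ^ n := pow_le_pow_of_le_one h0 h1.le (by omega)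
  linarith

lemma one_sub_pow_pos (h0 : 0 ≤ t) (h1 : t < 1) (n : ℕ) : 0 < 1 - t ^ (n + 1) := by
  have h2 : t ^ (n + 1) ≤ t := pow_le_of_le_one h0 h1.le (Nat.succ_ne_zero n)
  linarith

/-- Summability of the logs for the `C` product. -/
lemma summable_log_inv_one_sub (h0 : 0 ≤ t) (h1 : t < 1) :
    Summable fun n : ℕ => Real.log ((1 - t ^ (n + 1))⁻¹) := by
  apply Summable.of_nonneg_of_le (fun n => ?_) (fun n => ?_)
    ((summable_geometric_of_lt_one h0 h1).mul_right ((1 - t)⁻¹))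
  · rw [Real.log_inv]
    have hx := one_sub_pow_pos h0 h1 n
    have : Real.log (1 - t ^ (n + 1)) ≤ 0 :=
      Real.log_nonpos (by linarith) (by nlinarith [pow_nonneg h0 (n + 1)])
    linarith
  · rw [Real.log_inv]
    have hx := one_sub_pow_pos h0 h1 n
    have h2 : t ^ (n + 1) ≤ t := pow_le_of_le_one h0 h1.le (Nat.succ_ne_zero n)
    have hlog := Real.log_le_sub_one_of_pos (inv_pos.mpr hx)
    rw [Real.log_inv] at hlog
    have heq : (1 - t ^ (n + 1))⁻¹ - 1 = t ^ (n + 1) * (1 - t ^ (n + 1))⁻¹ := by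
      field_simp
      ring
    have hle : t ^ (n + 1) * (1 - t ^ (n + 1))⁻¹ ≤ t ^ n * (1 - t)⁻¹ := by
      apply mul_le_mul (pow_le_pow_of_le_one h0 h1.le (by omega))
        (inv_anti₀ (by linarith) (by linarith))
        (inv_nonneg.mpr hx.le) (pow_nonneg h0 n)
    linarith

set_option maxHeartbeats 1000000 in
lemma multipliable_D (h0 : 0 ≤ t) (h1 : t < 1) :
    Multipliable fun i : ℕ => 1 + t ^ (i + 1) := by
  have := Real.multipliable_of_summable_log (f := fun i : ℕ => 1 + t ^ (i + 1))
    (fun n => by positivity) (summable_log_one_add h0 h1)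
  exact this

set_option maxHeartbeats 1000000 in
lemma multipliable_C (h0 : 0 ≤ t) (h1 : t < 1) :
    Multipliable fun i : ℕ => (1 - t ^ (i + 1))⁻¹ := by
  have := Real.multipliable_of_summable_log (f := fun i : ℕ => (1 - t ^ (i + 1))⁻¹)
    (fun n => inv_pos.mpr (one_sub_pow_pos h0 h1 n))
    (summable_log_inv_one_sub h0 h1)
  exact this

/-- Finite products bounded by the infinite product, for factors `≥ 1` on `ℝ`. -/
lemma prod_le_tprod_real {f : ℕ → ℝ} (hm : Multipliable f) (h1 : ∀ i, 1 ≤ f i) (s : Finset ℕ) :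
    ∏ j ∈ s, f j ≤ ∏' i, f i := by
  refine ge_of_tendsto hm.hasProd (Filter.eventually_atTop.2 ⟨s, fun t hst => ?_⟩)
  rw [← Finset.prod_sdiff hst]
  have hones : (1:ℝ) ≤ ∏ j ∈ t \ s, f j := by
    calc (1:ℝ) = ∏ _j ∈ t \ s, (1:ℝ) := by simp
    _ ≤ ∏ j ∈ t \ s, f j := Finset.prod_le_prod (by simp) (fun i _ => h1 i)
  have hpos : 0 ≤ ∏ j ∈ s, f j := Finset.prod_nonneg fun i _ => le_trans zero_le_one (h1 i)
  exact le_mul_of_one_le_left hpos hones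

lemma one_le_D_factor (hq : |q| < 1) (i : ℕ) : (1:ℝ) ≤ 1 + |q| ^ (i + 1) := by
  nlinarith [pow_nonneg (abs_nonneg q) (i + 1)]

lemma one_le_C_factor (h0 : 0 ≤ t) (h1 : t < 1) (i : ℕ) : (1:ℝ) ≤ (1 - t ^ (i + 1))⁻¹ := by
  have hx := one_sub_pow_pos h0 h1 i
  rw [le_inv_comm₀ one_pos hx]
  nlinarith [pow_nonneg h0 (i + 1)]

lemma prod_le_D (hq : |q| < 1) (s : Finset ℕ) :
    ∏ j ∈ s, (1 + |q| ^ (j + 1)) ≤ Dconst q :=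
  prod_le_tprod_real (multipliable_D (abs_nonneg q) hq) (one_le_D_factor hq) s

lemma prod_le_C (h0 : 0 ≤ t) (h1 : t < 1) (s : Finset ℕ) :
    ∏ j ∈ s, (1 - t ^ (j + 1))⁻¹ ≤ Cconst t :=
  prod_le_tprod_real (multipliable_C h0 h1) (one_le_C_factor h0 h1) s

lemma one_le_D (hq : |q| < 1) : 1 ≤ Dconst q := by
  simpa using prod_le_D hq ∅

lemma one_le_C (h0 : 0 ≤ t) (h1 : t < 1) : 1 ≤ Cconst t := by
  simpa using prod_le_C h0 h1 ∅

lemma DC_pos (hq : |q| < 1) : 0 < Dconst q * Cconst |q| :=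
  mul_pos (lt_of_lt_of_le one_pos (one_le_D hq))
    (lt_of_lt_of_le one_pos (one_le_C (abs_nonneg q) hq))

lemma one_le_DC (hq : |q| < 1) : 1 ≤ Dconst q * Cconst |q| := by
  nlinarith [one_le_D hq, one_le_C (abs_nonneg q) hq]

/-- The finite product `∏ (1+t^{j+1})(1-t^{j+1})⁻¹` is bounded by `D·C`. -/
lemma prodDC_le (hq : |q| < 1) (m : ℕ) :
    ∏ j ∈ Finset.range m, ((1 + |q| ^ (j + 1)) * (1 - |q| ^ (j + 1))⁻¹) ≤
      Dconst q * Cconst |q| := by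
  rw [Finset.prod_mul_distrib]
  have h0 := abs_nonneg q
  apply mul_le_mul (prod_le_D hq _) (prod_le_C h0 hq _) ?_
    (le_trans zero_le_one (one_le_D hq))
  · apply Finset.prod_nonneg
    intro i _
    exact (inv_pos.mpr (one_sub_pow_pos h0 hq i)).le

lemma prodDC_pos (hq : |q| < 1) (m : ℕ) :
    0 < ∏ j ∈ Finset.range m, ((1 + |q| ^ (j + 1)) * (1 - |q| ^ (j + 1))⁻¹) := by
  apply Finset.prod_pos
  intro i _
  have h1 := one_sub_pow_pos (abs_nonneg q) hq i
  have h2 : (0:ℝ) ≤ |q| ^ (i + 1) := pow_nonneg (abs_nonneg q) _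
  positivity

/-- Per-factor upper bound in the q-binomial product. -/
lemma factor_le (hq : |q| < 1) (c j : ℕ) :
    qInt q (c + j + 1) / qInt q (j + 1) ≤ (1 + |q| ^ (j + 1)) * (1 - |q| ^ (j + 1))⁻¹ := by
  have h1 := one_sub_q_pos hq
  have h0 := abs_nonneg q
  have hnum : qInt q (c + j + 1) ≤ (1 + |q| ^ (j + 1)) / (1 - q) := by
    refine (qInt_le hq _).trans ?_
    have : |q| ^ (c + j + 1) ≤ |q| ^ (j + 1) :=
      pow_le_pow_of_le_one h0 hq.le (by omega)
    gcongr
  have hden : (1 - |q| ^ (j + 1)) / (1 - q) ≤ qInt q (j + 1) := qInt_ge hq _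
  have hdpos : 0 < (1 - |q| ^ (j + 1)) / (1 - q) :=
    div_pos (one_sub_pow_pos h0 hq j) h1
  have hnn : (0:ℝ) ≤ (1 + |q| ^ (j + 1)) / (1 - q) := by positivity
  have hbound : qInt q (c + j + 1) / qInt q (j + 1) ≤
      ((1 + |q| ^ (j + 1)) / (1 - q)) / ((1 - |q| ^ (j + 1)) / (1 - q)) :=
    div_le_div₀ hnn hnum hdpos hden
  refine hbound.trans_eq ?_
  have hp := (one_sub_pow_pos h0 hq j).ne'
  field_simp

/-- Per-factor lower bound in the q-binomial product. -/
lemma factor_ge (hq : |q| < 1) (c j : ℕ) :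
    ((1 + |q| ^ (j + 1)) * (1 - |q| ^ (j + 1))⁻¹)⁻¹ ≤
      qInt q (c + j + 1) / qInt q (j + 1) := by
  have h1 := one_sub_q_pos hq
  have h0 := abs_nonneg q
  have hnum : (1 - |q| ^ (j + 1)) / (1 - q) ≤ qInt q (c + j + 1) := by
    refine le_trans ?_ (qInt_ge hq _)
    have : |q| ^ (c + j + 1) ≤ |q| ^ (j + 1) :=
      pow_le_pow_of_le_one h0 hq.le (by omega)
    gcongr
  have hden : qInt q (j + 1) ≤ (1 + |q| ^ (j + 1)) / (1 - q) := qInt_le hq _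
  have hdpos : 0 < qInt q (j + 1) := qInt_pos hq (by omega)
  have hqnn : 0 ≤ qInt q (c + j + 1) := (qInt_pos hq (by omega : 1 ≤ c + j + 1)).le
  have hbound : ((1 - |q| ^ (j + 1)) / (1 - q)) / ((1 + |q| ^ (j + 1)) / (1 - q)) ≤
      qInt q (c + j + 1) / qInt q (j + 1) :=
    div_le_div₀ hqnn hnum hdpos hden
  refine le_trans (le_of_eq ?_) hbound
  have hp := (one_sub_pow_pos h0 hq j).ne'
  have hop : (0:ℝ) < 1 + |q| ^ (j + 1) := by positivity
  field_simp

lemma qBinom_le_DC (hq : |q| < 1) (n m : ℕ) :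
    qBinom q n m ≤ Dconst q * Cconst |q| := by
  by_cases h : m ≤ n
  · rw [qBinom_eq hq h]
    refine le_trans (Finset.prod_le_prod (fun j _ => ?_) (fun j _ => ?_)) (prodDC_le hq m)
    · exact div_nonneg (qInt_pos hq (by omega : 1 ≤ n - m + j + 1)).le
        (qInt_pos hq (by omega : 1 ≤ j + 1)).le
    · exact factor_le hq (n - m) j
  · unfold qBinom
    rw [if_neg h]
    exact le_trans zero_le_one (one_le_DC hq)

lemma qBinom_ge_DC (hq : |q| < 1) {n m : ℕ} (h : m ≤ n) :
    (Dconst q * Cconst |q|)⁻¹ ≤ qBinom q n m := by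
  rw [qBinom_eq hq h]
  calc (Dconst q * Cconst |q|)⁻¹
      ≤ (∏ j ∈ Finset.range m, ((1 + |q| ^ (j + 1)) * (1 - |q| ^ (j + 1))⁻¹))⁻¹ :=
        inv_anti₀ (prodDC_pos hq m) (prodDC_le hq m)
    _ = ∏ j ∈ Finset.range m, ((1 + |q| ^ (j + 1)) * (1 - |q| ^ (j + 1))⁻¹)⁻¹ := by
        rw [← Finset.prod_inv_distrib]
    _ ≤ ∏ j ∈ Finset.range m, (qInt q (n - m + j + 1) / qInt q (j + 1)) := by
        apply Finset.prod_le_prod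
        · intro j _
          have h1 := one_sub_pow_pos (abs_nonneg q) hq j
          have h2 : (0:ℝ) ≤ |q| ^ (j + 1) := pow_nonneg (abs_nonneg q) _
          positivity
        · intro j _
          exact factor_ge hq (n - m) j

lemma qFact_mul_le (hq : |q| < 1) (a b : ℕ) :
    qFact q a * qFact q b ≤ (Dconst q * Cconst |q|) * qFact q (a + b) := by
  have hb := qBinom_ge_DC hq (show a ≤ a + b by omega)
  unfold qBinom at hb
  rw [if_pos (show a ≤ a + b by omega), Nat.add_sub_cancel_left] at hb
  have hP : 0 < qFact q a * qFact q b := mul_pos (qFact_pos hq a) (qFact_pos hq b)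
  rw [le_div_iff₀ hP] at hb
  have hDC := DC_pos hq
  calc qFact q a * qFact q b
      = (Dconst q * Cconst |q|) * ((Dconst q * Cconst |q|)⁻¹ * (qFact q a * qFact q b)) := by
        rw [← mul_assoc, mul_inv_cancel₀ hDC.ne', one_mul]
    _ ≤ (Dconst q * Cconst |q|) * qFact q (a + b) :=
        mul_le_mul_of_nonneg_left hb hDC.le

lemma geom_sum_le_inv (h0 : 0 ≤ t) (h1 : t < 1) (n : ℕ) :
    ∑ j ∈ Finset.range n, t ^ j ≤ (1 - t)⁻¹ := by
  have h3 : 0 < 1 - t := by linarith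
  have h2 : (∑ j ∈ Finset.range n, t ^ j) * (t - 1) = t ^ n - 1 := geom_sum_mul t n
  rw [show (1 - t)⁻¹ = 1 / (1 - t) from (one_div _).symm, le_div_iff₀ h3]
  nlinarith [pow_nonneg h0 n]

end Aux

/-- Upper estimate of the inner-product sum for `-1 < q < 0`,
with `F(q) = D(q)³ C(|q|)³ / (1 - |q|)`. -/
theorem inner_sum_upper_neg (q : ℝ) (hq₁ : -1 < q) (hq₂ : q < 0)
    (r s r' s' k : ℕ) (hsum : r + s = r' + s') (hr : r' ≤ r) :
    |∑ i ∈ Finset.range (r' + 1),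
      q ^ ((r - i) * (r' - i) + k * (r - i) + k * (r' - i)) *
        qFact q r' * qFact q s' * qBinom q r i * qBinom q s (r' - i)| ≤
    (Dconst q ^ 3 * Cconst |q| ^ 3 / (1 - |q|)) * |q| ^ (k * (r - r')) * qFact q (r + s) := by
  have hq : |q| < 1 := abs_lt.mpr ⟨hq₁, by linarith⟩
  have ht0 : (0:ℝ) ≤ |q| := abs_nonneg q
  set D := Dconst q with hD
  set C := Cconst |q| with hC
  have hDC := DC_pos hq
  have hFact := qFact_pos hq (r + s)
  have hfacts : qFact q r' * qFact q s' ≤ (D * C) * qFact q (r + s) := by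
    have := qFact_mul_le hq r' s'
    rwa [← hsum] at this
  have hgeom : ∑ i ∈ Finset.range (r' + 1), |q| ^ (r' - i) ≤ (1 - |q|)⁻¹ := by
    have h := Finset.sum_range_reflect (fun j => |q| ^ j) (r' + 1)
    simp only [Nat.add_sub_cancel] at h
    calc ∑ i ∈ Finset.range (r' + 1), |q| ^ (r' - i)
        = ∑ j ∈ Finset.range (r' + 1), |q| ^ j := h
      _ ≤ (1 - |q|)⁻¹ := geom_sum_le_inv ht0 hq (r' + 1)
  calc |∑ i ∈ Finset.range (r' + 1),
      q ^ ((r - i) * (r' - i) + k * (r - i) + k * (r' - i)) *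
        qFact q r' * qFact q s' * qBinom q r i * qBinom q s (r' - i)|
      ≤ ∑ i ∈ Finset.range (r' + 1),
        |q ^ ((r - i) * (r' - i) + k * (r - i) + k * (r' - i)) *
          qFact q r' * qFact q s' * qBinom q r i * qBinom q s (r' - i)| :=
        Finset.abs_sum_le_sum_abs _ _
    _ ≤ ∑ i ∈ Finset.range (r' + 1),
        (|q| ^ (k * (r - r')) * ((D * C) ^ 3 * qFact q (r + s))) * |q| ^ (r' - i) := by
        apply Finset.sum_le_sum
        intro i hi
        have hi' : i ≤ r' := by
          simp only [Finset.mem_range] at hi; omega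
        rw [abs_mul, abs_mul, abs_mul, abs_mul, abs_pow,
          abs_of_pos (qFact_pos hq r'), abs_of_pos (qFact_pos hq s'),
          abs_of_nonneg (qBinom_nonneg hq r i), abs_of_nonneg (qBinom_nonneg hq s (r' - i))]
        have he : k * (r - r') + (r' - i) ≤
            (r - i) * (r' - i) + k * (r - i) + k * (r' - i) := by
          have h1 : k * (r - r') ≤ k * (r - i) :=
            Nat.mul_le_mul_left k (Nat.sub_le_sub_left hi' r)
          have h2 : (r' - i) ≤ (r - i) * (r' - i) := by
            rcases Nat.lt_or_ge i r' with h | h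
            · exact Nat.le_mul_of_pos_left _ (by omega)
            · omega
          omega
        have hpow : |q| ^ ((r - i) * (r' - i) + k * (r - i) + k * (r' - i)) ≤
            |q| ^ (k * (r - r') + (r' - i)) :=
          pow_le_pow_of_le_one ht0 hq.le he
        calc |q| ^ ((r - i) * (r' - i) + k * (r - i) + k * (r' - i)) *
              qFact q r' * qFact q s' * qBinom q r i * qBinom q s (r' - i)
            = |q| ^ ((r - i) * (r' - i) + k * (r - i) + k * (r' - i)) *
              (qFact q r' * qFact q s') * (qBinom q r i * qBinom q s (r' - i)) := by ring
          _ ≤ |q| ^ (k * (r - r') + (r' - i)) *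
              ((D * C) * qFact q (r + s)) * ((D * C) * (D * C)) := by
              have hb1 := qBinom_le_DC hq r i
              have hb2 := qBinom_le_DC hq s (r' - i)
              have hn1 := qBinom_nonneg hq r i
              have hn2 := qBinom_nonneg hq s (r' - i)
              have hfn : 0 ≤ qFact q r' * qFact q s' :=
                (mul_pos (qFact_pos hq r') (qFact_pos hq s')).le
              gcongr
          _ = (|q| ^ (k * (r - r')) * ((D * C) ^ 3 * qFact q (r + s))) * |q| ^ (r' - i) := by
              rw [pow_add]; ring
    _ = (|q| ^ (k * (r - r')) * ((D * C) ^ 3 * qFact q (r + s))) *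
          ∑ i ∈ Finset.range (r' + 1), |q| ^ (r' - i) := by
        rw [← Finset.mul_sum]
    _ ≤ (|q| ^ (k * (r - r')) * ((D * C) ^ 3 * qFact q (r + s))) * (1 - |q|)⁻¹ := by
        apply mul_le_mul_of_nonneg_left hgeom
        positivity
    _ = (D ^ 3 * C ^ 3 / (1 - |q|)) * |q| ^ (k * (r - r')) * qFact q (r + s) := by
        rw [div_eq_mul_inv, mul_pow]
        ring
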